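/- Recall maximality of the optimal tree: for every valid configuration c = (z, σ, t) and every reachable tree t' ∈ D(c), r(t') ≤ r(t*(c)), i.e., |t' ∩ t_G| ≤ |t*(c) ∩ t_G|. (Part of the proof of Theorem 1.) -/

import Mathlib

/-!
Formalization of the span-based Structure/Label transition parsing system of
Cross & Huang (2016), "Span-Based Constituency Parsing with a Structure-Label
System and Provably Optimal Dynamic Oracles".

A configuration is `(z, σ, t)` where `z` is the step number, `σ` the stack of
span boundaries and `t` the set of brackets built so far.  A bracket is a
triple `(X, i, j)` with `X` a nonterminal label and `i < j ≤ n` a span.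
-/

namespace SpanParser

structure Config (N : Type*) where
  z : ℕ
  σ : List ℕ
  t : Finset (N × ℕ × ℕ)

variable {N : Type*}

/-- The span of a bracket. -/
def span (b : N × ℕ × ℕ) : ℕ × ℕ := b.2

/-- Top (rightmost) boundary of the stack. -/
def topJ (σ : List ℕ) : ℕ := σ.getLastD 0

/-- Second-to-top boundary of the stack. -/
def topI (σ : List ℕ) : ℕ := σ.dropLast.getLastD 0

/-- Parser actions: shift, combine, label-`X`, and nolabel. -/
inductive Action (N : Type*) where
  | sh : Action N
  | comb : Action N
  | label : N → Action N
  | nolabel : Action N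

variable [DecidableEq N]

/-- Applicability of an action at a configuration (for sentence length `n`). -/
def App (n : ℕ) (c : Config N) : Action N → Prop
  | .sh      => Even c.z ∧ c.σ ≠ [] ∧ topJ c.σ < n
  | .comb    => Even c.z ∧ 3 ≤ c.σ.length
  | .label _ => Odd c.z ∧ 2 ≤ c.σ.length
  | .nolabel => Odd c.z ∧ 2 ≤ c.σ.length ∧ c.z < 4 * n - 1

/-- The result `τ(c)` of applying action `τ` to configuration `c`. -/
def doAct (c : Config N) : Action N → Config N
  | .sh      => ⟨c.z + 1, c.σ ++ [topJ c.σ + 1], c.t⟩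
  | .comb    => ⟨c.z + 1, c.σ.dropLast.dropLast ++ [topJ c.σ], c.t⟩
  | .label X => ⟨c.z + 1, c.σ, insert (X, topI c.σ, topJ c.σ) c.t⟩
  | .nolabel => ⟨c.z + 1, c.σ, c.t⟩

/-- The initial configuration `(0, [0], ∅)`. -/
def initial (N : Type*) : Config N := ⟨0, [0], ∅⟩

/-- One transition step `c ⊢ c'`. -/
def Step (n : ℕ) (c c' : Config N) : Prop := ∃ a, App n c a ∧ c' = doAct c a

/-- `⊢*`: reflexive-transitive closure of the transition relation. -/
def Reaches (n : ℕ) : Config N → Config N → Prop := Relation.ReflTransGen (Step n)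

/-- A configuration is valid if it is reachable from the initial configuration. -/
def Valid (n : ℕ) (c : Config N) : Prop := Reaches n (initial N) c

/-- A final configuration: `σ = [0, n]` and `z = 4n - 2`. -/
def Final (n : ℕ) (c : Config N) : Prop := c.σ = [0, n] ∧ c.z = 4 * n - 2

/-- `D(c)`: the set of trees of final configurations reachable from `c`. -/
def Dset (n : ℕ) (c : Config N) : Set (Finset (N × ℕ × ℕ)) :=
  {t' | ∃ c', Reaches n c c' ∧ Final n c' ∧ c'.t = t'}

/-- `(i,j) ⪯ (p,q)`: span `(i,j)` is encompassed by `(p,q)`, i.e. `p ≤ i < j ≤ q`. -/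
def Enc (s₁ s₂ : ℕ × ℕ) : Prop := s₂.1 ≤ s₁.1 ∧ s₁.1 < s₁.2 ∧ s₁.2 ≤ s₂.2

/-- `(i,j) ≺ (p,q)`: strict encompassment. -/
def SEnc (s₁ s₂ : ℕ × ℕ) : Prop := Enc s₁ s₂ ∧ s₁ ≠ s₂

/-- `tG` is a gold tree for sentence length `n`: valid spans, pairwise-distinct
spans, pairwise non-crossing spans, and exactly one bracket with span `(0, n)`
(uniqueness follows from distinctness of spans). -/
structure IsGold (n : ℕ) (tG : Finset (N × ℕ × ℕ)) : Prop where
  validSpans : ∀ b ∈ tG, (span b).1 < (span b).2 ∧ (span b).2 ≤ n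
  distinctSpans : ∀ b₁ ∈ tG, ∀ b₂ ∈ tG, span b₁ = span b₂ → b₁ = b₂
  noncrossing : ∀ b₁ ∈ tG, ∀ b₂ ∈ tG,
    Enc (span b₁) (span b₂) ∨ Enc (span b₂) (span b₁) ∨
    (span b₁).2 ≤ (span b₂).1 ∨ (span b₂).2 ≤ (span b₁).1
  root : ∃ X, (X, 0, n) ∈ tG

open Classical in
/-- `left(c)`: gold brackets (strictly, at even steps) encompassing the top
span whose left boundary occurs on the stack. -/
noncomputable def leftSet (tG : Finset (N × ℕ × ℕ)) (c : Config N) :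
    Finset (N × ℕ × ℕ) :=
  tG.filter fun b =>
    (if Even c.z then SEnc (topI c.σ, topJ c.σ) (span b)
     else Enc (topI c.σ, topJ c.σ) (span b)) ∧ (span b).1 ∈ c.σ

open Classical in
/-- `right(c)`: gold brackets entirely on the queue. -/
noncomputable def rightSet (tG : Finset (N × ℕ × ℕ)) (c : Config N) :
    Finset (N × ℕ × ℕ) :=
  tG.filter fun b => topJ c.σ ≤ (span b).1

open Classical in
/-- `reach(c)`: the reachable gold brackets (all of `t_G` at the initial
configuration, whose stack has fewer than two boundaries). -/
noncomputable def reach (tG : Finset (N × ℕ × ℕ)) (c : Config N) :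
    Finset (N × ℕ × ℕ) :=
  if c.σ.length < 2 then tG else leftSet tG c ∪ rightSet tG c

/-- The optimal tree `t*(c) = t ∪ reach(c)`. -/
noncomputable def tstar (tG : Finset (N × ℕ × ℕ)) (c : Config N) :
    Finset (N × ℕ × ℕ) :=
  c.t ∪ reach tG c

/-- `b = next(c)`: the `≺`-minimal element of `left(c)`. -/
def IsNext (tG : Finset (N × ℕ × ℕ)) (c : Config N) (b : N × ℕ × ℕ) : Prop :=
  b ∈ leftSet tG c ∧ ∀ b' ∈ leftSet tG c, Enc (span b) (span b')

/-- The dynamic-oracle policy `dyna(c)` as a predicate on actions. -/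
def Dyna (tG : Finset (N × ℕ × ℕ)) (c : Config N) (a : Action N) : Prop :=
  if c.σ.length < 2 then a = Action.sh
  else if Even c.z then
    ∃ b, IsNext tG c b ∧
      (((span b).1 = topI c.σ ∧ topJ c.σ < (span b).2 ∧ a = Action.sh) ∨
       ((span b).1 < topI c.σ ∧ (span b).2 = topJ c.σ ∧ a = Action.comb) ∨
       ((span b).1 < topI c.σ ∧ topJ c.σ < (span b).2 ∧
          (a = Action.sh ∨ a = Action.comb)))
  else
    (∃ X, (X, topI c.σ, topJ c.σ) ∈ tG ∧ a = Action.label X) ∨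
    ((∀ X, (X, topI c.σ, topJ c.σ) ∉ tG) ∧ a = Action.nolabel)

/-- `F1` of a predicted bracket set `t'` against the gold tree `tG`
(`0` when `t' ∩ tG = ∅`). -/
noncomputable def f1 (tG t' : Finset (N × ℕ × ℕ)) : ℝ :=
  if t' ∩ tG = ∅ then 0
  else
    (2 * (((t' ∩ tG).card : ℝ) / (tG.card : ℝ)) * (((t' ∩ tG).card : ℝ) / (t'.card : ℝ))) /
      ((((t' ∩ tG).card : ℝ) / (tG.card : ℝ)) + (((t' ∩ tG).card : ℝ) / (t'.card : ℝ)))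

/-- `F1(c)`: the best `F1` among trees reachable from `c`. -/
noncomputable def configF1 (n : ℕ) (tG : Finset (N × ℕ × ℕ)) (c : Config N) : ℝ :=
  sSup (f1 tG '' Dset n c)

/-- A run of (applicable) actions from one configuration to another. -/
inductive Run (n : ℕ) : Config N → List (Action N) → Config N → Prop
  | refl (c : Config N) : Run n c [] c
  | step {c c' : Config N} {as : List (Action N)} (a : Action N)
      (happ : App n c a) (h : Run n (doAct c a) as c') : Run n c (a :: as) c'

/-- A run all of whose actions follow the dynamic oracle. -/
inductive DynaRun (n : ℕ) (tG : Finset (N × ℕ × ℕ)) : Config N → Config N → Prop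
  | refl (c : Config N) : DynaRun n tG c c
  | step {c c' : Config N} (a : Action N) (happ : App n c a) (hdyna : Dyna tG c a)
      (h : DynaRun n tG (doAct c a) c') : DynaRun n tG c c'

def isSh : Action N → Bool
  | .sh => true
  | _ => false

def isComb : Action N → Bool
  | .comb => true
  | _ => false

/-- Label-step actions: `label-X` or `nolabel`. -/
def isLabelStep : Action N → Bool
  | .label _ => true
  | .nolabel => true
  | _ => false



/-! ### Auxiliary lemmas -/

lemma topJ_concat (A : List ℕ) (a : ℕ) : topJ (A ++ [a]) = a := by
  simp [topJ]

lemma topI_concat (A : List ℕ) (a : ℕ) : topI (A ++ [a]) = topJ A := by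
  simp [topI, topJ]

lemma topJ_concat2 (A : List ℕ) (x y : ℕ) : topJ (A ++ [x, y]) = y := by
  rw [show A ++ [x, y] = (A ++ [x]) ++ [y] by simp, topJ_concat]

lemma topI_concat2 (A : List ℕ) (x y : ℕ) : topI (A ++ [x, y]) = x := by
  rw [show A ++ [x, y] = (A ++ [x]) ++ [y] by simp, topI_concat, topJ_concat]

lemma topJ_mem {σ : List ℕ} (h : σ ≠ []) : topJ σ ∈ σ := by
  rcases σ.eq_nil_or_concat with rfl | ⟨A, a, rfl⟩
  · exact absurd rfl h
  · rw [List.concat_eq_append, topJ_concat]; simp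

lemma exists_decomp {σ : List ℕ} (h2 : 2 ≤ σ.length) :
    ∃ A, σ = A ++ [topI σ, topJ σ] := by
  rcases σ.eq_nil_or_concat with rfl | ⟨B, y, rfl⟩
  · simp at h2
  rcases B.eq_nil_or_concat with rfl | ⟨A, x, rfl⟩
  · simp at h2
  refine ⟨A, ?_⟩
  simp only [List.concat_eq_append, List.append_assoc, List.singleton_append]
  rw [topI_concat2, topJ_concat2]

lemma le_topJ {σ : List ℕ} (hs : σ.Pairwise (· < ·)) {x : ℕ} (hx : x ∈ σ) :
    x ≤ topJ σ := by
  rcases σ.eq_nil_or_concat with rfl | ⟨A, a, rfl⟩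
  · simp at hx
  · rw [List.concat_eq_append] at hx hs ⊢
    rw [topJ_concat]
    rcases List.mem_append.1 hx with hx | hx
    · exact le_of_lt ((List.pairwise_append.1 hs).2.2 x hx a (by simp))
    · simp at hx; omega

lemma dropLast_dropLast_concat2 (A : List ℕ) (x y : ℕ) :
    (A ++ [x, y]).dropLast.dropLast = A := by
  rw [show A ++ [x, y] = (A ++ [x]) ++ [y] by simp]
  simp

open Classical in
lemma mem_reach' {tG : Finset (N × ℕ × ℕ)} {z : ℕ} {σ : List ℕ}
    {t : Finset (N × ℕ × ℕ)} (h2 : 2 ≤ σ.length) {b : N × ℕ × ℕ} :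
    b ∈ reach tG ⟨z, σ, t⟩ ↔ b ∈ tG ∧
      (((if Even z then SEnc (topI σ, topJ σ) (span b)
          else Enc (topI σ, topJ σ) (span b)) ∧ (span b).1 ∈ σ) ∨
        topJ σ ≤ (span b).1) := by
  rw [reach, if_neg (by simp; omega)]
  simp only [Finset.mem_union, leftSet, rightSet, Finset.mem_filter]
  tauto

lemma inv_step {n : ℕ} {c : Config N} {a : Action N}
    (hne : c.σ ≠ []) (hs : c.σ.Pairwise (· < ·)) (happ : App n c a) :
    (doAct c a).σ ≠ [] ∧ (doAct c a).σ.Pairwise (· < ·) := by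
  cases a with
  | sh =>
      refine ⟨by simp [doAct], ?_⟩
      simp only [doAct]
      rw [List.pairwise_append]
      refine ⟨hs, by simp, ?_⟩
      intro x hx y hy
      simp only [List.mem_singleton] at hy
      subst hy
      have := le_topJ hs hx
      omega
  | comb =>
      have h3 : 3 ≤ c.σ.length := happ.2
      obtain ⟨A, hA⟩ := exists_decomp (by omega : 2 ≤ c.σ.length)
      refine ⟨by simp [doAct], ?_⟩
      simp only [doAct]
      rw [hA, dropLast_dropLast_concat2, topJ_concat2]
      have hsub : (A ++ [topJ c.σ]).Sublist (A ++ [topI c.σ, topJ c.σ]) :=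
        List.Sublist.append_left (List.sublist_cons_self _ _) A
      rw [hA] at hs
      exact List.Pairwise.sublist hsub hs
  | label X => exact ⟨hne, hs⟩
  | nolabel => exact ⟨hne, hs⟩


lemma reach_step {n : ℕ} {tG : Finset (N × ℕ × ℕ)} {c : Config N}
    (hs : c.σ.Pairwise (· < ·)) {a : Action N} (happ : App n c a)
    {b : N × ℕ × ℕ} (hbG : b ∈ tG)
    (hb : b ∈ (doAct c a).t ∪ reach tG (doAct c a)) :
    b ∈ c.t ∪ reach tG c := by
  by_cases h2 : c.σ.length < 2
  · rcases Finset.mem_union.1 hb with hb | hb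
    · cases a with
      | sh => exact Finset.mem_union_left _ hb
      | comb => exact Finset.mem_union_left _ hb
      | label X => exact absurd happ.2 (by omega)
      | nolabel => exact Finset.mem_union_left _ hb
    · refine Finset.mem_union_right _ ?_
      rw [reach, if_pos h2]; exact hbG
  push_neg at h2
  obtain ⟨A, hA⟩ := exists_decomp h2
  have hne : c.σ ≠ [] := by rw [hA]; simp
  have hsA : (A ++ [topI c.σ, topJ c.σ]).Pairwise (· < ·) := hA ▸ hs
  have hij : topI c.σ < topJ c.σ := by
    have := (List.pairwise_append.1 hsA).2.1
    exact (List.pairwise_cons.1 this).1 _ (by simp)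
  have hAi : ∀ x ∈ A, x < topI c.σ := fun x hx =>
    (List.pairwise_append.1 hsA).2.2 x hx _ (by simp)
  have hmemI : topI c.σ ∈ c.σ := by
    have h : topI c.σ ∈ A ++ [topI c.σ, topJ c.σ] := by simp
    rwa [← hA] at h
  have hlt_le : ∀ x ∈ c.σ, x < topJ c.σ → x ≤ topI c.σ := by
    intro x hx hxj
    rw [hA] at hx
    rcases List.mem_append.1 hx with hx | hx
    · exact le_of_lt (hAi x hx)
    · simp only [List.mem_cons, List.not_mem_nil, or_false] at hx
      rcases hx with rfl | rfl
      · exact le_refl _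
      · omega
  cases a with
  | sh =>
      obtain ⟨hev, -, -⟩ := happ
      rcases Finset.mem_union.1 hb with hb | hb
      · exact Finset.mem_union_left _ hb
      refine Finset.mem_union_right _ ?_
      simp only [doAct] at hb
      rw [mem_reach' (by simp; omega)] at hb
      rw [topJ_concat, topI_concat] at hb
      have hnev : ¬ Even (c.z + 1) := by simp [Nat.even_add_one, hev]
      rw [if_neg hnev] at hb
      rw [mem_reach' h2, if_pos hev]
      obtain ⟨-, hb⟩ := hb
      refine ⟨hbG, ?_⟩
      rcases hb with ⟨⟨hp1, -, hq1⟩, hmem⟩ | hright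
      · -- Enc (topJ, topJ+1) (span b), p ∈ σ ++ [topJ+1]
        simp only at hp1 hq1
        by_cases hjp : topJ c.σ ≤ (span b).1
        · exact Or.inr hjp
        push_neg at hjp
        have hpσ : (span b).1 ∈ c.σ := by
          rcases List.mem_append.1 hmem with h | h
          · exact h
          · simp at h; omega
        refine Or.inl ⟨⟨⟨hlt_le _ hpσ hjp, hij, by omega⟩, ?_⟩, hpσ⟩
        intro hcon
        rw [Prod.ext_iff] at hcon
        simp only at hcon
        omega
      · exact Or.inr (by omega)
  | comb =>
      obtain ⟨hev, h3⟩ := happ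
      have hAne : A ≠ [] := by
        intro h; rw [h] at hA; rw [hA] at h3; simp at h3
      rcases Finset.mem_union.1 hb with hb | hb
      · exact Finset.mem_union_left _ hb
      refine Finset.mem_union_right _ ?_
      simp only [doAct] at hb
      rw [hA, dropLast_dropLast_concat2, topJ_concat2] at hb
      rw [mem_reach' (show 2 ≤ (A ++ [topJ c.σ]).length by
        have := List.length_pos_iff.2 hAne
        simp only [List.length_append, List.length_cons, List.length_nil]
        omega)] at hb
      rw [topJ_concat, topI_concat] at hb
      have hnev : ¬ Even (c.z + 1) := by simp [Nat.even_add_one, hev]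
      rw [if_neg hnev] at hb
      rw [mem_reach' h2, if_pos hev]
      obtain ⟨-, hb⟩ := hb
      refine ⟨hbG, ?_⟩
      have hhA : topJ A ∈ A := topJ_mem hAne
      have hhi : topJ A < topI c.σ := hAi _ hhA
      rcases hb with ⟨⟨hp1, -, hq1⟩, hmem⟩ | hright
      · simp only at hp1 hq1
        have hpσ : (span b).1 ∈ A := by
          rcases List.mem_append.1 hmem with h | h
          · exact h
          · simp at h; omega
        refine Or.inl ⟨⟨⟨by omega, hij, hq1⟩, ?_⟩, by rw [hA]; simp [hpσ]⟩
        intro hcon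
        rw [Prod.ext_iff] at hcon
        simp only at hcon
        omega
      · exact Or.inr hright
  | label X =>
      obtain ⟨hodd, -⟩ := happ
      have hnev : ¬ Even c.z := Nat.not_even_iff_odd.2 hodd
      have hev1 : Even (c.z + 1) := Nat.even_add_one.2 hnev
      rcases Finset.mem_union.1 hb with hb | hb
      · rcases Finset.mem_insert.1 hb with rfl | hb
        · refine Finset.mem_union_right _ ?_
          rw [mem_reach' h2, if_neg hnev]
          exact ⟨hbG, Or.inl ⟨⟨le_refl _, hij, le_refl _⟩, hmemI⟩⟩
        · exact Finset.mem_union_left _ hb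
      · refine Finset.mem_union_right _ ?_
        simp only [doAct] at hb
        rw [mem_reach' h2, if_pos hev1] at hb
        rw [mem_reach' h2, if_neg hnev]
        obtain ⟨-, hb⟩ := hb
        refine ⟨hbG, ?_⟩
        rcases hb with ⟨hsenc, hmem⟩ | hright
        · exact Or.inl ⟨hsenc.1, hmem⟩
        · exact Or.inr hright
  | nolabel =>
      obtain ⟨hodd, -, -⟩ := happ
      have hnev : ¬ Even c.z := Nat.not_even_iff_odd.2 hodd
      have hev1 : Even (c.z + 1) := Nat.even_add_one.2 hnev
      rcases Finset.mem_union.1 hb with hb | hb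
      · exact Finset.mem_union_left _ hb
      · refine Finset.mem_union_right _ ?_
        simp only [doAct] at hb
        rw [mem_reach' h2, if_pos hev1] at hb
        rw [mem_reach' h2, if_neg hnev]
        obtain ⟨-, hb⟩ := hb
        refine ⟨hbG, ?_⟩
        rcases hb with ⟨hsenc, hmem⟩ | hright
        · exact Or.inl ⟨hsenc.1, hmem⟩
        · exact Or.inr hright

lemma key {n : ℕ} (tG : Finset (N × ℕ × ℕ)) {b : N × ℕ × ℕ} (hbG : b ∈ tG)
    {c cf : Config N} (hb : b ∈ cf.t) (hr : Reaches n c cf) :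
    c.σ ≠ [] → c.σ.Pairwise (· < ·) → b ∈ c.t ∪ reach tG c := by
  induction hr using Relation.ReflTransGen.head_induction_on with
  | refl => intro _ _; exact Finset.mem_union_left _ hb
  | head hstep _ ih =>
      intro hne hsort
      obtain ⟨a, happ, rfl⟩ := hstep
      have hinv' := inv_step hne hsort happ
      exact reach_step hsort happ hbG (ih hinv'.1 hinv'.2)

lemma inv_of_valid {n : ℕ} {c : Config N} (h : Valid n c) :
    c.σ ≠ [] ∧ c.σ.Pairwise (· < ·) := by
  induction h with
  | refl => exact ⟨by simp [initial], by simp [initial]⟩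
  | tail _ hstep ih =>
      obtain ⟨a, happ, rfl⟩ := hstep
      exact inv_step ih.1 ih.2 happ

/-- Recall maximality of the optimal tree: for every valid `c` and every
`t' ∈ D(c)`, `r(t') ≤ r(t*(c))`, i.e. `|t' ∩ t_G| ≤ |t*(c) ∩ t_G|`. -/
theorem recall_maximal (n : ℕ) (hn : 1 ≤ n) (tG : Finset (N × ℕ × ℕ))
    (hG : IsGold n tG) (c : Config N) (hc : Valid n c)
    (t' : Finset (N × ℕ × ℕ)) (ht' : t' ∈ Dset n c) :
    (t' ∩ tG).card ≤ (tstar tG c ∩ tG).card ∧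
      ((t' ∩ tG).card : ℝ) / (tG.card : ℝ) ≤
        ((tstar tG c ∩ tG).card : ℝ) / (tG.card : ℝ) := by
  obtain ⟨cf, hr, hfin, rfl⟩ := ht'
  have hinv := inv_of_valid hc
  have hsub : cf.t ∩ tG ⊆ tstar tG c ∩ tG := by
    intro b hb
    rw [Finset.mem_inter] at hb ⊢
    exact ⟨key tG hb.2 hb.1 hr hinv.1 hinv.2, hb.2⟩
  have hcard := Finset.card_le_card hsub
  refine ⟨hcard, ?_⟩
  rcases Nat.eq_zero_or_pos tG.card with h0 | h0
  · simp [h0]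
  · have hpos : (0 : ℝ) < tG.card := by exact_mod_cast h0
    gcongr

end SpanParser
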